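/- Let G be a group, μ a unitary character of G, δ > 0, and f, g : G → ℂ satisfying |f(xy) + μ(y) f(xy⁻¹) - 2 f(x) g(y)| ≤ δ for all x, y ∈ G. If g is unbounded, then (f, g) satisfies the μ-Wilson equation f(xy) + μ(y) f(xy⁻¹) = 2 f(x) g(y) exactly for all x, y ∈ G. -/

import Mathlib

theorem stmt_15 {G : Type*} [Group G] (μ f g : G → ℂ) (δ : ℝ) (hδ : 0 < δ)
    (hμ : ∀ x y, μ (x * y) = μ x * μ y) (hμ1 : ∀ x, ‖μ x‖ = 1)
    (hfg : ∀ x y, ‖f (x * y) + μ y * f (x * y⁻¹) - 2 * f x * g y‖ ≤ δ)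
    (hg : ¬ ∃ C : ℝ, ∀ x, ‖g x‖ ≤ C) :
    ∀ x y, f (x * y) + μ y * f (x * y⁻¹) = 2 * f x * g y := by
  have hμne : ∀ u, μ u ≠ 0 := by
    intro u h
    have h1 := hμ1 u
    rw [h] at h1
    simp at h1
  have hμ1e : μ 1 = 1 := by
    have h := hμ 1 1
    rw [one_mul] at h
    have h2 : μ 1 * 1 = μ 1 * μ 1 := by rw [mul_one]; exact h
    exact (mul_left_cancel₀ (hμne 1) h2).symm
  have hμinv : ∀ u, μ u⁻¹ = (μ u)⁻¹ := by
    intro u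
    have h : μ u * μ u⁻¹ = 1 := by
      rw [← hμ, mul_inv_cancel, hμ1e]
    exact eq_inv_of_mul_eq_one_right h
  by_cases hfb : ∃ C : ℝ, ∀ u, ‖f u‖ ≤ C
  · -- f bounded: then f ≡ 0, equation trivial
    obtain ⟨C, hC⟩ := hfb
    have hf0 : ∀ u, f u = 0 := by
      by_contra hcon
      push_neg at hcon
      obtain ⟨u, hu⟩ := hcon
      have hfu : 0 < ‖f u‖ := norm_pos_iff.mpr hu
      apply hg
      refine ⟨(C + C + δ) / (2 * ‖f u‖), fun v => ?_⟩
      rw [le_div_iff₀ (by positivity)]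
      have h1 := hfg u v
      have h2 : (2:ℂ) * f u * g v =
          (f (u * v) + μ v * f (u * v⁻¹)) +
          -(f (u * v) + μ v * f (u * v⁻¹) - 2 * f u * g v) := by ring
      have h3 : ‖2 * f u * g v‖ ≤ C + C + δ := by
        rw [h2]
        refine le_trans (norm_add_le _ _) (add_le_add ?_ ?_)
        · refine le_trans (norm_add_le _ _) (add_le_add (hC _) ?_)
          rw [norm_mul, hμ1, one_mul]
          exact hC _
        · rw [norm_neg]
          exact h1
      rw [norm_mul, norm_mul, Complex.norm_two] at h3
      nlinarith [norm_nonneg (g v), norm_nonneg (f u)]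
    intro x y
    simp [hf0]
  · -- f unbounded
    obtain ⟨E, hE⟩ : ∃ E : G → G → ℂ,
        E = fun u v => f (u * v) + μ v * f (u * v⁻¹) - 2 * f u * g v := ⟨_, rfl⟩
    have hEb : ∀ u v, ‖E u v‖ ≤ δ := by
      intro u v
      simpa [hE] using hfg u v
    have habs : ∀ (c : ℂ) (u v : G), ‖c * E u v‖ ≤ ‖c‖ * δ := by
      intro c u v
      rw [norm_mul]
      exact mul_le_mul_of_nonneg_left (hEb u v) (norm_nonneg c)
    have tri : ∀ (a b : ℂ) (A B : ℝ), ‖a‖ ≤ A → ‖b‖ ≤ B →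
        ‖a + b‖ ≤ A + B := by
      intro a b A B ha hb
      exact le_trans (norm_add_le a b) (add_le_add ha hb)
    -- the master identity
    have master : ∀ u y z : G,
        f u * (4 * g y * g z - 2 * g (y * z) - 2 * μ z * g (y * z⁻¹)
            - 2 * g (z * y) - 2 * μ z * g (z⁻¹ * y) + 4 * μ y * g y⁻¹ * g z)
        = (-(2 * g z)) * E u y + (-(μ y)) * E (u * z) y⁻¹
          + (-(μ y * μ z)) * E (u * z⁻¹) y⁻¹ + (-(2 * μ y * g y⁻¹)) * E u z
          + E u (z * y) + μ z * E u (z⁻¹ * y)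
          + (-1) * E (u * y) z + (-(μ y)) * E (u * y⁻¹) z
          + E u (y * z) + μ z * E u (y * z⁻¹) := by
      intro u y z
      simp only [hE]
      simp only [mul_inv_rev, inv_inv, mul_assoc, hμ, hμinv]
      field_simp [hμne y, hμne z]
      ring
    -- step 1: the d'Alembert-type defect vanishes
    have hKey : ∀ y z : G,
        (4 * g y * g z - 2 * g (y * z) - 2 * μ z * g (y * z⁻¹)
            - 2 * g (z * y) - 2 * μ z * g (z⁻¹ * y) + 4 * μ y * g y⁻¹ * g z) = 0 := by
      intro y z
      by_contra hD
      apply hfb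
      have hDpos : 0 < ‖4 * g y * g z - 2 * g (y * z) - 2 * μ z * g (y * z⁻¹)
            - 2 * g (z * y) - 2 * μ z * g (z⁻¹ * y) + 4 * μ y * g y⁻¹ * g z‖ :=
        norm_pos_iff.mpr hD
      refine ⟨((8 + 2 * ‖g y⁻¹‖ + 2 * ‖g z‖) * δ) /
        ‖4 * g y * g z - 2 * g (y * z) - 2 * μ z * g (y * z⁻¹)
            - 2 * g (z * y) - 2 * μ z * g (z⁻¹ * y) + 4 * μ y * g y⁻¹ * g z‖, fun u => ?_⟩
      rw [le_div_iff₀ hDpos]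
      rw [← norm_mul]
      rw [master u y z]
      have hsum : ‖(-(2 * g z)) * E u y + (-(μ y)) * E (u * z) y⁻¹
          + (-(μ y * μ z)) * E (u * z⁻¹) y⁻¹ + (-(2 * μ y * g y⁻¹)) * E u z
          + E u (z * y) + μ z * E u (z⁻¹ * y)
          + (-1) * E (u * y) z + (-(μ y)) * E (u * y⁻¹) z
          + E u (y * z) + μ z * E u (y * z⁻¹)‖ ≤
          ‖-(2 * g z)‖ * δ + ‖-(μ y)‖ * δ
          + ‖-(μ y * μ z)‖ * δ + ‖-(2 * μ y * g y⁻¹)‖ * δ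
          + δ + ‖μ z‖ * δ
          + ‖(-1 : ℂ)‖ * δ + ‖-(μ y)‖ * δ
          + δ + ‖μ z‖ * δ := by
        refine tri _ _ _ _ (tri _ _ _ _ (tri _ _ _ _ (tri _ _ _ _ (tri _ _ _ _
          (tri _ _ _ _ (tri _ _ _ _ (tri _ _ _ _ (tri _ _ _ _
          (habs _ _ _) (habs _ _ _)) (habs _ _ _)) (habs _ _ _)) (hEb _ _))
          (habs _ _ _)) (habs _ _ _)) (habs _ _ _)) (hEb _ _)) (habs _ _ _)
      refine le_trans hsum (le_of_eq ?_)
      simp only [norm_neg, norm_mul, hμ1, Complex.norm_two, norm_one]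
      ring
    -- step 2: conclude the exact equation
    intro x y
    by_contra hne
    have hExy : E x y ≠ 0 := by
      simp only [hE]
      intro h0
      exact hne (by linear_combination h0)
    have hEpos : 0 < ‖E x y‖ := norm_pos_iff.mpr hExy
    apply hg
    refine ⟨((8 + 2 * ‖g y⁻¹‖) * δ) / (2 * ‖E x y‖), fun z => ?_⟩
    rw [le_div_iff₀ (by positivity)]
    have hm := master x y z
    rw [hKey y z, mul_zero] at hm
    have hrest : (2 * g z) * E x y = (-(μ y)) * E (x * z) y⁻¹
          + (-(μ y * μ z)) * E (x * z⁻¹) y⁻¹ + (-(2 * μ y * g y⁻¹)) * E x z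
          + E x (z * y) + μ z * E x (z⁻¹ * y)
          + (-1) * E (x * y) z + (-(μ y)) * E (x * y⁻¹) z
          + E x (y * z) + μ z * E x (y * z⁻¹) := by
      linear_combination hm
    have hsum : ‖(-(μ y)) * E (x * z) y⁻¹
          + (-(μ y * μ z)) * E (x * z⁻¹) y⁻¹ + (-(2 * μ y * g y⁻¹)) * E x z
          + E x (z * y) + μ z * E x (z⁻¹ * y)
          + (-1) * E (x * y) z + (-(μ y)) * E (x * y⁻¹) z
          + E x (y * z) + μ z * E x (y * z⁻¹)‖ ≤
          ‖-(μ y)‖ * δ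
          + ‖-(μ y * μ z)‖ * δ + ‖-(2 * μ y * g y⁻¹)‖ * δ
          + δ + ‖μ z‖ * δ
          + ‖(-1 : ℂ)‖ * δ + ‖-(μ y)‖ * δ
          + δ + ‖μ z‖ * δ := by
      refine tri _ _ _ _ (tri _ _ _ _ (tri _ _ _ _ (tri _ _ _ _
          (tri _ _ _ _ (tri _ _ _ _ (tri _ _ _ _ (tri _ _ _ _
          (habs _ _ _) (habs _ _ _)) (habs _ _ _)) (hEb _ _))
          (habs _ _ _)) (habs _ _ _)) (habs _ _ _)) (hEb _ _)) (habs _ _ _)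
    have hb : ‖(2 * g z) * E x y‖ ≤ (8 + 2 * ‖g y⁻¹‖) * δ := by
      rw [hrest]
      refine le_trans hsum (le_of_eq ?_)
      simp only [norm_neg, norm_mul, hμ1, Complex.norm_two, norm_one]
      ring
    rw [norm_mul, norm_mul, Complex.norm_two] at hb
    nlinarith [norm_nonneg (g z), norm_nonneg (E x y)]
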